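/- Let A₀ be an n×n row-stochastic matrix with strictly positive diagonal, and let v : [0,T] → ℝ^n_{>0} satisfy v̇ᵢ = vᵢ(p_i(t) − q(t)) for a common scalar function q(t), with v(0) = 𝟙. Define 𝒜(v) = diag(A₀v)^{-1} A₀ diag(v), i.e. a_{ij} = a_{ij}(0)v_j / ∑ₖ a_{ik}(0)v_k. Then A(t) = 𝒜(v(t)) satisfies A(0) = A₀, A(t) is row-stochastic, and ȧ_{ij} = a_{ij}(p_j(t) − ∑ₖ a_{ik}(t)p_k(t)). -/

import Mathlib

/-- Order reduction: if v satisfies v̇ᵢ = vᵢ(pᵢ − q) with v(0) = 𝟙, then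
A(t) = diag(A₀v)⁻¹ A₀ diag(v) starts at A₀, stays row-stochastic, and
satisfies the replicator appraisal dynamics. -/
theorem stmt_9 (n : ℕ) (A0 : Matrix (Fin n) (Fin n) ℝ)
    (hA0nonneg : ∀ i j, 0 ≤ A0 i j)
    (hA0row : ∀ i, ∑ j, A0 i j = 1)
    (hA0diag : ∀ i, 0 < A0 i i)
    (p : ℝ → Fin n → ℝ) (hp : ∀ k, Continuous fun t => p t k)
    (q : ℝ → ℝ) (hq : Continuous q)
    (v : ℝ → Fin n → ℝ) (hvpos : ∀ t i, 0 < v t i)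
    (hv0 : ∀ i, v 0 i = 1)
    (hvderiv : ∀ t i, HasDerivAt (fun s => v s i) (v t i * (p t i - q t)) t)
    (A : ℝ → Matrix (Fin n) (Fin n) ℝ)
    (hA : ∀ t i j, A t i j = A0 i j * v t j / ∑ k, A0 i k * v t k) :
    (∀ i j, A 0 i j = A0 i j) ∧
    (∀ t, (∀ i j, 0 ≤ A t i j) ∧ (∀ i, ∑ j, A t i j = 1)) ∧
    (∀ t i j, HasDerivAt (fun s => A s i j)
      (A t i j * (p t j - ∑ k, A t i k * p t k)) t) := by
  have hSpos : ∀ t i, 0 < ∑ k, A0 i k * v t k := by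
    intro t i
    apply Finset.sum_pos' (fun k _ => mul_nonneg (hA0nonneg i k) (hvpos t k).le)
    exact ⟨i, Finset.mem_univ i, mul_pos (hA0diag i) (hvpos t i)⟩
  refine ⟨?_, ?_, ?_⟩
  · intro i j
    rw [hA]
    simp only [hv0, mul_one, hA0row]
    simp
  · intro t
    refine ⟨fun i j => ?_, fun i => ?_⟩
    · rw [hA]
      exact div_nonneg (mul_nonneg (hA0nonneg i j) (hvpos t j).le) (hSpos t i).le
    · simp only [hA]
      rw [← Finset.sum_div, div_eq_one_iff_eq (hSpos t i).ne']
  · intro t i j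
    have hS : HasDerivAt (fun s => ∑ k, A0 i k * v s k)
        (∑ k, A0 i k * (v t k * (p t k - q t))) t :=
      HasDerivAt.fun_sum fun k _ => (hvderiv t k).const_mul (A0 i k)
    have hnum : HasDerivAt (fun s => A0 i j * v s j)
        (A0 i j * (v t j * (p t j - q t))) t := (hvderiv t j).const_mul (A0 i j)
    have hd := hnum.fun_div hS (hSpos t i).ne'
    have heq : (fun s => A s i j) = fun s => A0 i j * v s j / ∑ k, A0 i k * v s k := by
      funext s; exact hA s i j
    rw [heq]
    refine hd.congr_deriv (Eq.symm ?_)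
    have hSne := (hSpos t i).ne'
    rw [hA t i j]
    have hAk : ∀ k, A t i k = A0 i k * v t k / ∑ k', A0 i k' * v t k' := fun k => hA t i k
    simp only [hAk]
    rw [show (∑ k, A0 i k * v t k / (∑ k', A0 i k' * v t k') * p t k)
        = (∑ k, A0 i k * v t k * p t k) / (∑ k', A0 i k' * v t k') by
      rw [Finset.sum_div]; congr 1; funext k; ring]
    have hexp : ∑ k, A0 i k * (v t k * (p t k - q t))
        = (∑ k, A0 i k * v t k * p t k) - q t * ∑ k, A0 i k * v t k := by
      rw [Finset.mul_sum, ← Finset.sum_sub_distrib]; congr 1; funext k; ring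
    rw [hexp]
    field_simp
    ring
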